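/- On the generic Verma module V̂, the divided powers multiply according to the Gaussian binomial rule: for all n, m ≥ 1, as R-linear endomorphisms of V̂ one has F⁽ⁿ⁾ ∘ F⁽ᵐ⁾ = C(n+m, n)_q · F⁽ⁿ⁺ᵐ⁾. -/

import Mathlib

/-!
Setup: `R = ℤ[q^{±1}, s^{±1}]` realized as `AddMonoidAlgebra ℤ (ℤ × ℤ)`, where
`qp a b` denotes the monomial `q^a * s^b`.  The generic Verma module `V̂` is the
free `R`-module `ℕ →₀ R` with basis `(v i)`.
-/

noncomputable section ADO

/-- The ring `ℤ[q^{±1}, s^{±1}]`. -/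
abbrev Rqs : Type := AddMonoidAlgebra ℤ (ℤ × ℤ)

/-- The monomial `q^a s^b`. -/
def qp (a b : ℤ) : Rqs := AddMonoidAlgebra.single (a, b) 1

/-- The variable `q`. -/
def qvar : Rqs := qp 1 0

/-- The balanced quantum integer `[k]_q = ∑_{j=0}^{k-1} q^{k-1-2j}`. -/
def qint (k : ℕ) : Rqs := ∑ j ∈ Finset.range k, qp ((k : ℤ) - 1 - 2 * (j : ℤ)) 0

/-- The quantum factorial `[k]_q!`. -/
def qfact (k : ℕ) : Rqs := ∏ j ∈ Finset.range k, qint (j + 1)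

/-- The generic Verma module `V̂`, a free `Rqs`-module with basis indexed by `ℕ`. -/
abbrev Vhat : Type := ℕ →₀ Rqs

/-- The basis vector `v i` of the generic Verma module. -/
def v (i : ℕ) : Vhat := Finsupp.single i 1


noncomputable def phi : Rqs →ₐ[ℤ] ℤ := AddMonoidAlgebra.lift ℤ ℤ (ℤ×ℤ) 1

lemma phi_qp (a b : ℤ) : phi (qp a b) = 1 := by
  simp [phi, qp, AddMonoidAlgebra.lift_single]

lemma qint_ne_zero (k : ℕ) (hk : 1 ≤ k) : qint k ≠ 0 := by
  intro h
  have : phi (qint k) = 0 := by rw [h]; simp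
  rw [qint] at this
  simp only [map_sum, phi_qp, Finset.sum_const, Finset.card_range, nsmul_eq_mul, mul_one] at this
  omega

lemma qfact_ne_zero (k : ℕ) : qfact k ≠ 0 := by
  rw [qfact]
  exact Finset.prod_ne_zero_iff.2 fun j _ => qint_ne_zero (j+1) (by omega)

theorem stmt1
    -- the balanced Gaussian binomial coefficients, given by their defining property
    (C : ℕ → ℕ → Rqs)
    (hC : ∀ a b : ℕ, b ≤ a → C a b * qfact b * qfact (a - b) = qfact a)
    -- the operators on the generic Verma module, determined on the basis
    (K Kinv E : Module.End Rqs Vhat) (F : ℕ → Module.End Rqs Vhat)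
    (hK : ∀ i : ℕ, K (v i) = qp (-2 * (i : ℤ)) 1 • v i)
    (hKinv : ∀ i : ℕ, Kinv (v i) = qp (2 * (i : ℤ)) (-1) • v i)
    (hE0 : E (v 0) = 0)
    (hE : ∀ i : ℕ, E (v (i + 1)) = v i)
    (hF0 : F 0 = LinearMap.id)
    (hF : ∀ n i : ℕ, 1 ≤ n → F n (v i) =
      (C (n + i) i *
        ∏ k ∈ Finset.range n, (qp (-(k : ℤ) - (i : ℤ)) 1 - qp ((k : ℤ) + (i : ℤ)) (-1))) • v (i + n)) :
    ∀ n m : ℕ, 1 ≤ n → 1 ≤ m → F n ∘ₗ F m = C (n + m) n • F (n + m) := by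

  intro n m hn hm
  apply Module.Basis.ext (Finsupp.basisSingleOne (R := Rqs))
  intro i
  have hb : (Finsupp.basisSingleOne : Module.Basis ℕ Rqs Vhat) i = v i := rfl
  rw [hb]
  have key : C (m + i) i * C (n + (i + m)) (i + m) = C (n + m) n * C (n + m + i) i := by
    have h1 := hC (i + m) i (by omega)
    have h2 := hC (n + m + i) (i + m) (by omega)
    have h3 := hC (n + m) n (by omega)
    have h4 := hC (n + m + i) i (by omega)
    rw [show (i + m) - i = m from by omega] at h1
    rw [show (n + m + i) - (i + m) = n from by omega] at h2
    rw [show (n + m) - n = m from by omega] at h3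
    rw [show (n + m + i) - i = n + m from by omega] at h4
    rw [show m + i = i + m from by omega, show n + (i + m) = n + m + i from by omega]
    have hX : qfact i * qfact m * qfact n * qfact (i + m) ≠ 0 :=
      mul_ne_zero (mul_ne_zero (mul_ne_zero (qfact_ne_zero i) (qfact_ne_zero m))
        (qfact_ne_zero n)) (qfact_ne_zero (i + m))
    apply mul_right_cancel₀ hX
    linear_combination (C (n + m + i) (i + m) * qfact (i + m) * qfact n) * h1 +
      qfact (i + m) * h2 - (C (n + m + i) i * qfact i * qfact (i + m)) * h3 -
      qfact (i + m) * h4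
  have hsplit : (∏ k ∈ Finset.range (n + m),
        (qp (-(k : ℤ) - (i : ℤ)) 1 - qp ((k : ℤ) + (i : ℤ)) (-1)))
      = (∏ k ∈ Finset.range m, (qp (-(k : ℤ) - (i : ℤ)) 1 - qp ((k : ℤ) + (i : ℤ)) (-1))) *
        (∏ k ∈ Finset.range n,
          (qp (-(k : ℤ) - ((i + m : ℕ) : ℤ)) 1 - qp ((k : ℤ) + ((i + m : ℕ) : ℤ)) (-1))) := by
    rw [show n + m = m + n from by omega, Finset.prod_range_add]
    congr 1
    apply Finset.prod_congr rfl
    intro k _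
    have e1 : (-((m + k : ℕ) : ℤ) - (i : ℤ)) = (-(k : ℤ) - ((i + m : ℕ) : ℤ)) := by
      push_cast; ring
    have e2 : (((m + k : ℕ) : ℤ) + (i : ℤ)) = ((k : ℤ) + ((i + m : ℕ) : ℤ)) := by
      push_cast; ring
    rw [e1, e2]
  rw [LinearMap.comp_apply, LinearMap.smul_apply]
  rw [hF m i hm, map_smul, hF n (i + m) hn, hF (n + m) i (by omega)]
  rw [smul_smul, smul_smul]
  rw [show i + m + n = i + (n + m) from by omega]
  congr 1
  rw [hsplit]
  linear_combination ((∏ k ∈ Finset.range m,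
      (qp (-(k : ℤ) - (i : ℤ)) 1 - qp ((k : ℤ) + (i : ℤ)) (-1))) *
    (∏ k ∈ Finset.range n,
      (qp (-(k : ℤ) - ((i + m : ℕ) : ℤ)) 1 - qp ((k : ℤ) + ((i + m : ℕ) : ℤ)) (-1)))) * key

end ADO
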